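/- Let G be a series-parallel graph (i.e., containing no subdivision of K4) with a planar embedding, let v be a cut-vertex of G, and let e1=(u,v) and e2=(w,v) be two edges consecutive in the cyclic order around v such that e1 belongs to a block b1 of G and e2 belongs to a different block b2. Then the graph G* obtained from G by adding a new vertex z together with edges (u,z) and (w,z) is still series-parallel (contains no K4-subdivision), and G* has exactly one fewer block than G. -/

import Mathlib

/-- `G` contains a subdivision of `K₄`: four distinct branch vertices pairwise joined
by paths which share only the appropriate branch vertices. -/
def HasK4Subdivision {V : Type*} (G : SimpleGraph V) : Prop :=
  ∃ f : Fin 4 → V, Function.Injective f ∧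
    ∃ w : ∀ i j : Fin 4, G.Walk (f i) (f j),
      (∀ i j : Fin 4, i ≠ j → (w i j).IsPath) ∧
      (∀ i j k l : Fin 4, i ≠ j → k ≠ l → ({i, j} : Set (Fin 4)) ≠ {k, l} →
        ∀ x : V, x ∈ (w i j).support → x ∈ (w k l).support →
          x ∈ f '' (({i, j} : Set (Fin 4)) ∩ {k, l}))

/-- A nonempty set of vertices inducing a connected subgraph with no cut-vertex
(single edges and single vertices allowed). -/
def TwoConnSet {V : Type*} (G : SimpleGraph V) (B : Set V) : Prop :=
  B.Nonempty ∧ (G.induce B).Connected ∧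
    ∀ v ∈ B, B = {v} ∨ (G.induce (B \ {v})).Connected

/-- A block of `G`: a maximal set of vertices inducing a connected subgraph without
cut-vertices. -/
def IsBlock {V : Type*} (G : SimpleGraph V) (B : Set V) : Prop :=
  TwoConnSet G B ∧ ∀ C : Set V, B ⊆ C → TwoConnSet G C → C = B

/-- The number of blocks of `G`. -/
noncomputable def numBlocks {V : Type*} (G : SimpleGraph V) : ℕ :=
  Nat.card {B : Set V // IsBlock G B}

/-- A cut-vertex: removing it increases the number of connected components. -/
def IsCutVertex {V : Type*} (G : SimpleGraph V) (v : V) : Prop :=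
  Nat.card G.ConnectedComponent <
    Nat.card (G.induce ({v}ᶜ : Set V)).ConnectedComponent

/-- The graph obtained from `G` by adding a new vertex `z` (the `none` vertex)
together with the two edges `(u,z)` and `(w,z)`. -/
def addVertexTwoEdges {V : Type*} (G : SimpleGraph V) (u w : V) :
    SimpleGraph (Option V) :=
  SimpleGraph.fromRel (fun a b =>
    (∃ x y : V, a = some x ∧ b = some y ∧ G.Adj x y) ∨
      (a = none ∧ (b = some u ∨ b = some w)))

open SimpleGraph Set Function

namespace K4Aux

/-! ### Generic connectivity lemmas -/

section Generic

variable {V : Type*} {G : SimpleGraph V}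

lemma reachable_induce_of_walk {A : Set V} :
    ∀ {x y : V} (p : G.Walk x y), (∀ z ∈ p.support, z ∈ A) → ∀ (hx : x ∈ A) (hy : y ∈ A),
      (G.induce A).Reachable ⟨x, hx⟩ ⟨y, hy⟩ := by
  intro x y p
  induction p with
  | nil => intro _ hx hy; exact Reachable.refl _
  | @cons a b c h q ih =>
      intro hsup hx hy
      have hb : b ∈ A := hsup b (by simp)
      have hadj : (G.induce A).Adj ⟨a, hx⟩ ⟨b, hb⟩ := by simpa using h
      exact hadj.reachable.trans (ih (fun z hz => hsup z (by simp [hz])) hb hy)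

lemma induce_connected_iff' {A : Set V} :
    (G.induce A).Connected ↔
      A.Nonempty ∧ ∀ x ∈ A, ∀ y ∈ A, ∃ p : G.Walk x y, ∀ z ∈ p.support, z ∈ A := by
  constructor
  · intro h
    obtain ⟨⟨a, ha⟩⟩ := h.nonempty
    refine ⟨⟨a, ha⟩, fun x hx y hy => ?_⟩
    obtain ⟨p⟩ := h.preconnected ⟨x, hx⟩ ⟨y, hy⟩
    let f : G.induce A →g G := ⟨Subtype.val, fun {c d} hcd => by simpa using hcd⟩
    refine ⟨p.map f, fun z hz => ?_⟩
    simp only [Walk.support_map] at hz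
    obtain ⟨t, _, rfl⟩ := List.mem_map.1 hz
    exact t.2
  · rintro ⟨⟨a, ha⟩, h⟩
    rw [connected_iff]
    refine ⟨fun x y => ?_, ⟨⟨a, ha⟩⟩⟩
    obtain ⟨p, hp⟩ := h x.1 x.2 y.1 y.2
    exact reachable_induce_of_walk p hp x.2 y.2

lemma walk_conn {a b : V} (W : G.Walk a b) {x y : V} (hx : x ∈ W.support) (hy : y ∈ W.support) :
    ∃ p : G.Walk x y, ∀ z ∈ p.support, z ∈ W.support := by
  classical
  refine ⟨(W.takeUntil x hx).reverse.append (W.takeUntil y hy), fun z hz => ?_⟩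
  rw [Walk.mem_support_append_iff] at hz
  rcases hz with h1 | h2
  · rw [Walk.support_reverse, List.mem_reverse] at h1
    exact W.support_takeUntil_subset hx h1
  · exact W.support_takeUntil_subset hy h2

lemma induce_support_connected {a b : V} (W : G.Walk a b) :
    (G.induce {z | z ∈ W.support}).Connected :=
  induce_connected_iff'.mpr ⟨⟨a, W.start_mem_support⟩, fun _ hx _ hy => walk_conn W hx hy⟩

lemma induce_connected_of_hub {A : Set V} {h : V} (hh : h ∈ A)
    (H : ∀ x ∈ A, ∃ p : G.Walk x h, ∀ z ∈ p.support, z ∈ A) : (G.induce A).Connected := by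
  refine induce_connected_iff'.mpr ⟨⟨h, hh⟩, fun x hx y hy => ?_⟩
  obtain ⟨p, hp⟩ := H x hx
  obtain ⟨q, hq⟩ := H y hy
  refine ⟨p.append q.reverse, fun z hz => ?_⟩
  rw [Walk.mem_support_append_iff] at hz
  rcases hz with h1 | h2
  · exact hp _ h1
  · exact hq _ (by rwa [Walk.support_reverse, List.mem_reverse] at h2)

lemma induce_singleton_connected (x : V) : (G.induce {x}).Connected := by
  refine induce_connected_iff'.mpr ⟨⟨x, rfl⟩, fun a ha b hb => ?_⟩
  obtain rfl : a = x := ha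
  obtain rfl : b = a := hb
  exact ⟨Walk.nil, by simp⟩

lemma TwoConnSet.union' {B C : Set V} (hB : TwoConnSet G B) (hC : TwoConnSet G C)
    {x y : V} (hxB : x ∈ B) (hxC : x ∈ C) (hyB : y ∈ B) (hyC : y ∈ C) (hxy : x ≠ y) :
    TwoConnSet G (B ∪ C) := by
  obtain ⟨hBne, hBconn, hBdel⟩ := hB
  obtain ⟨hCne, hCconn, hCdel⟩ := hC
  refine ⟨⟨x, Or.inl hxB⟩, induce_union_connected hBconn.preconnected hCconn.preconnected ⟨x, hxB, hxC⟩, ?_⟩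
  intro t _
  right
  rw [Set.union_diff_distrib]
  have hBt : (G.induce (B \ {t})).Connected := by
    by_cases htB : t ∈ B
    · rcases hBdel t htB with h1 | h2
      · exact absurd ((h1 ▸ hxB).trans (h1 ▸ hyB).symm) hxy
      · exact h2
    · rwa [Set.diff_singleton_eq_self htB]
  have hCt : (G.induce (C \ {t})).Connected := by
    by_cases htC : t ∈ C
    · rcases hCdel t htC with h1 | h2
      · exact absurd ((h1 ▸ hxC).trans (h1 ▸ hyC).symm) hxy
      · exact h2
    · rwa [Set.diff_singleton_eq_self htC]
  apply induce_union_connected hBt.preconnected hCt.preconnected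
  rcases eq_or_ne x t with rfl | hxt
  · exact ⟨y, ⟨hyB, fun hy' => hxy hy'.symm⟩, hyC, fun hy' => hxy hy'.symm⟩
  · exact ⟨x, ⟨hxB, hxt⟩, hxC, hxt⟩

lemma exists_block [Finite V] {B : Set V} (hB : TwoConnSet G B) :
    ∃ D, IsBlock G D ∧ B ⊆ D := by
  have hfin : ({C | B ⊆ C ∧ TwoConnSet G C} : Set (Set V)).Finite := Set.toFinite _
  obtain ⟨D, hD, hmax⟩ := hfin.exists_maximal ⟨B, subset_rfl, hB⟩
  exact ⟨D, ⟨hD.2, fun C hC hCtc => (hmax ⟨hD.1.trans hC, hCtc⟩ hC).antisymm hC⟩, hD.1⟩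

lemma del_connected {B : Set V} (hB : TwoConnSet G B) {a c : V} (ha : a ∈ B) (hc : c ∈ B)
    (hac : a ≠ c) (y : V) : (G.induce (B \ {y})).Connected := by
  by_cases hy : y ∈ B
  · rcases hB.2.2 y hy with h1 | h2
    · exact absurd ((h1 ▸ ha).trans (h1 ▸ hc).symm) hac
    · exact h2
  · rw [Set.diff_singleton_eq_self hy]
    exact hB.2.1

lemma neighbor_in_connected {A : Set V} (h : (G.induce A).Connected) {a b : V}
    (ha : a ∈ A) (hb : b ∈ A) (hab : a ≠ b) : ∃ c ∈ A, G.Adj a c := by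
  obtain ⟨-, H⟩ := induce_connected_iff'.1 h
  obtain ⟨p, hp⟩ := H a ha b hb
  cases p with
  | nil => exact absurd rfl hab
  | cons hadj q => exact ⟨_, hp _ (by simp), hadj⟩

lemma second_vertex {a b : V} (p : G.Walk a b) (hne : a ≠ b) :
    ∃ s, s ∈ p.support ∧ G.Adj a s := by
  cases p with
  | nil => exact absurd rfl hne
  | cons h q => exact ⟨_, by simp, h⟩

lemma walk_last_edge [DecidableEq V] :
    ∀ {a e : V} (r : G.Walk a e), a ≠ e → r.support.count e = 1 →
    ∃ (s : V) (q : G.Walk a s), G.Adj s e ∧ e ∉ q.support ∧ ∀ z ∈ q.support, z ∈ r.support := by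
  intro a e r
  induction r with
  | nil => intro h _; exact absurd rfl h
  | @cons a b c h q ih =>
      intro hae hcount
      have hcq : q.support.count c = 1 := by
        rwa [Walk.support_cons, List.count_cons_of_ne hae] at hcount
      by_cases hbe : b = c
      · subst hbe
        cases q with
        | nil => exact ⟨a, Walk.nil, h, by simpa using Ne.symm hae, by simp⟩
        | @cons _ b2 _ h2 q2 =>
            exfalso
            rw [Walk.support_cons, List.count_cons_self] at hcq
            have h0 : List.count b q2.support = 0 := by omega
            exact (List.count_eq_zero.1 h0) q2.end_mem_support
      · obtain ⟨s, q2, hadj, hnot, hsub⟩ := ih hbe hcq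
        refine ⟨s, Walk.cons h q2, hadj, by simpa using ⟨Ne.symm hae, hnot⟩, fun z hz => ?_⟩
        rcases (by simpa using hz : z = a ∨ z ∈ q2.support) with rfl | h'
        · simp
        · simp [hsub z h']

lemma walk_avoid_end [DecidableEq V] {a e : V} (p : G.Walk a e) (hne : a ≠ e) :
    ∃ (s : V) (q : G.Walk a s), G.Adj s e ∧ e ∉ q.support ∧ ∀ z ∈ q.support, z ∈ p.support := by
  obtain ⟨s, q, hadj, hnot, hsub⟩ :=
    walk_last_edge (p.takeUntil e p.end_mem_support) hne
      (p.count_support_takeUntil_eq_one p.end_mem_support)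
  exact ⟨s, q, hadj, hnot, fun z hz => p.support_takeUntil_subset _ (hsub z hz)⟩

lemma not_end_mem_takeUntil [DecidableEq V] {a b x : V} {p : G.Walk a b}
    (hp : p.IsPath) (hx : x ∈ p.support) (hxb : x ≠ b) : b ∉ (p.takeUntil x hx).support := by
  intro hb
  have hnodup : ((p.takeUntil x hx).support ++ (p.dropUntil x hx).support.tail).Nodup := by
    rw [← Walk.support_append, p.take_spec hx]
    exact hp.support_nodup
  have hb2 : b ∈ (p.dropUntil x hx).support.tail := by
    have hmem : b ∈ (p.dropUntil x hx).support := (p.dropUntil x hx).end_mem_support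
    rw [(p.dropUntil x hx).support_eq_cons] at hmem
    rcases List.mem_cons.1 hmem with h | h
    · exact absurd h.symm hxb
    · exact h
  exact List.disjoint_of_nodup_append hnodup hb hb2

lemma not_start_mem_dropUntil [DecidableEq V] {a b x : V} {p : G.Walk a b}
    (hp : p.IsPath) (hx : x ∈ p.support) (hxa : x ≠ a) : a ∉ (p.dropUntil x hx).support := by
  intro ha
  have hnodup : ((p.takeUntil x hx).support ++ (p.dropUntil x hx).support.tail).Nodup := by
    rw [← Walk.support_append, p.take_spec hx]
    exact hp.support_nodup
  have ha2 : a ∈ (p.dropUntil x hx).support.tail := by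
    rw [(p.dropUntil x hx).support_eq_cons] at ha
    rcases List.mem_cons.1 ha with h | h
    · exact absurd h.symm hxa
    · exact h
  exact List.disjoint_of_nodup_append hnodup (p.takeUntil x hx).start_mem_support ha2

end Generic

end K4Aux

namespace K4Aux

section OptionGraph

variable {V : Type*} {G : SimpleGraph V} {u w : V}

lemma adj2_some_some {a b : V} :
    (addVertexTwoEdges G u w).Adj (some a) (some b) ↔ G.Adj a b := by
  simp only [addVertexTwoEdges, fromRel_adj]
  constructor
  · rintro ⟨hne, (⟨x, y, hx, hy, hxy⟩ | ⟨h, _⟩) | (⟨x, y, hx, hy, hxy⟩ | ⟨h, _⟩)⟩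
    · obtain rfl : a = x := by injection hx
      obtain rfl : b = y := by injection hy
      exact hxy
    · exact absurd h (by simp)
    · obtain rfl : b = x := by injection hx
      obtain rfl : a = y := by injection hy
      exact hxy.symm
    · exact absurd h (by simp)
  · intro h
    exact ⟨by simpa using h.ne, Or.inl (Or.inl ⟨a, b, rfl, rfl, h⟩)⟩

lemma adj2_none_iff {o : Option V} :
    (addVertexTwoEdges G u w).Adj none o ↔ o = some u ∨ o = some w := by
  simp only [addVertexTwoEdges, fromRel_adj]
  constructor
  · rintro ⟨hne, (⟨x, y, hx, _, _⟩ | ⟨_, h2⟩) | (⟨x, y, _, hy, _⟩ | ⟨h1, _⟩)⟩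
    · exact absurd hx (by simp)
    · exact h2
    · exact absurd hy (by simp)
    · exact absurd h1.symm hne
  · rintro (rfl | rfl) <;> exact ⟨by simp, by tauto⟩

lemma adj2_none_iff' {o : Option V} :
    (addVertexTwoEdges G u w).Adj o none ↔ o = some u ∨ o = some w := by
  rw [adj_comm, adj2_none_iff]

def homUp (G : SimpleGraph V) (u w : V) : G →g addVertexTwoEdges G u w :=
  ⟨some, fun h => adj2_some_some.2 h⟩

def homDown {v : V} (hvu : G.Adj v u) (hvw : G.Adj v w) :
    addVertexTwoEdges G u w →g G where
  toFun o := o.getD v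
  map_rel' := by
    intro a b hab
    match a, b with
    | some a, some b => exact adj2_some_some.1 hab
    | none, some b =>
        rcases adj2_none_iff.1 hab with h | h <;>
          · obtain rfl : b = _ := by injection h
            simpa using (by assumption : G.Adj v b)
    | some a, none =>
        rcases adj2_none_iff.1 hab.symm with h | h <;>
          · obtain rfl : a = _ := by injection h
            simpa using (by assumption : G.Adj v a).symm
    | none, none => exact absurd rfl hab.ne

lemma pushdown : ∀ {o1 o2 : Option V} (p : (addVertexTwoEdges G u w).Walk o1 o2),
    none ∉ p.support → ∃ (x y : V) (q : G.Walk x y), o1 = some x ∧ o2 = some y ∧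
      q.support.map some = p.support := by
  intro o1 o2 p
  induction p with
  | @nil o =>
      intro h
      match o, h with
      | some x, _ => exact ⟨x, x, Walk.nil, rfl, rfl, by simp⟩
      | none, h => exact absurd (by simp) h
  | @cons a b c h q ih =>
      intro hn
      have h1 : ¬(none = a ∨ none ∈ q.support) := by simpa using hn
      push_neg at h1
      obtain ⟨x, y, q', hb', hc', hsup⟩ := ih h1.2
      obtain ⟨x0, rfl⟩ : ∃ x0, a = some x0 := Option.ne_none_iff_exists'.1 (Ne.symm h1.1)
      subst hb'
      refine ⟨x0, y, Walk.cons (adj2_some_some.1 h) q', rfl, hc', by simp [hsup]⟩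

lemma mem_of_mem_map_support {x y : V} {q : G.Walk x y} {p : (addVertexTwoEdges G u w).Walk (some x) (some y)}
    (h : q.support.map some = p.support) {z : V} :
    z ∈ q.support ↔ some z ∈ p.support := by
  rw [← h]
  constructor
  · exact fun hz => List.mem_map_of_mem (f := some) hz
  · intro hz
    obtain ⟨t, ht, hts⟩ := List.mem_map.1 hz
    obtain rfl : t = z := by injection hts
    exact ht

lemma pushup_support {x y : V} (q : G.Walk x y) :
    (q.map (homUp G u w)).support = q.support.map some :=
  q.support_map _

lemma split_at_none : ∀ {c d : Option V} (p : (addVertexTwoEdges G u w).Walk c d),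
    c ≠ none → d ≠ none → none ∈ p.support →
    ∃ (x y : V) (h1 : (addVertexTwoEdges G u w).Adj (some x) none)
      (h2 : (addVertexTwoEdges G u w).Adj none (some y))
      (p1 : (addVertexTwoEdges G u w).Walk c (some x))
      (p2 : (addVertexTwoEdges G u w).Walk (some y) d),
      p = p1.append (Walk.cons h1 (Walk.cons h2 p2)) := by
  intro c d p
  induction p with
  | nil =>
      intro hc _ hz
      simp only [Walk.support_nil, List.mem_singleton] at hz
      exact absurd hz.symm hc
  | @cons a b c' h q ih =>
      intro ha hc' hz
      by_cases hb : b = none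
      · subst hb
        obtain ⟨x, rfl⟩ : ∃ x, a = some x := Option.ne_none_iff_exists'.1 ha
        cases q with
        | nil => exact absurd rfl hc'
        | @cons _ b2 _ h2 q2 =>
            obtain ⟨y, rfl⟩ : ∃ y, b2 = some y := Option.ne_none_iff_exists'.1 (Ne.symm h2.ne)
            exact ⟨x, y, h, h2, Walk.nil, q2, by rw [Walk.nil_append]⟩
      · have hz' : none ∈ q.support := by
          rcases (by simpa using hz : none = a ∨ none ∈ q.support) with h' | h'
          · exact absurd h'.symm ha
          · exact h'
        obtain ⟨x, y, h1, h2, p1, p2, rfl⟩ := ih hb hc' hz'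
        exact ⟨x, y, h1, h2, Walk.cons h p1, p2, by rw [Walk.cons_append]⟩

lemma pushdown_with_none {v : V} (hvu : G.Adj v u) (hvw : G.Adj v w) {o1 o2 : Option V}
    (p : (addVertexTwoEdges G u w).Walk o1 o2) :
    ∃ q : G.Walk (o1.getD v) (o2.getD v), ∀ z ∈ q.support, some z ∈ p.support ∨ z = v := by
  refine ⟨p.map (homDown hvu hvw), fun z hz => ?_⟩
  replace hz : z ∈ (p.map (homDown hvu hvw)).support := hz
  rw [Walk.support_map] at hz
  obtain ⟨o, ho, rfl⟩ := List.mem_map.1 hz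
  cases o with
  | none => exact Or.inr rfl
  | some t => exact Or.inl ho

lemma none_not_mem_iota {A : Set V} : (none : Option V) ∉ some '' A := by
  rintro ⟨t, _, ht⟩
  exact Option.some_ne_none t ht

lemma iota_connected_iff {A : Set V} :
    ((addVertexTwoEdges G u w).induce (some '' A)).Connected ↔ (G.induce A).Connected := by
  rw [induce_connected_iff', induce_connected_iff']
  constructor
  · rintro ⟨⟨o, ho⟩, h⟩
    obtain ⟨a, ha, rfl⟩ := ho
    refine ⟨⟨a, ha⟩, fun x hx y hy => ?_⟩
    obtain ⟨p, hp⟩ := h (some x) ⟨x, hx, rfl⟩ (some y) ⟨y, hy, rfl⟩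
    have hnone : none ∉ p.support := fun hc => none_not_mem_iota (hp none hc)
    obtain ⟨x', y', q, hx', hy', hsup⟩ := pushdown p hnone
    obtain rfl : x = x' := by injection hx'
    obtain rfl : y = y' := by injection hy'
    refine ⟨q, fun z hz => ?_⟩
    obtain ⟨t, htA, hts⟩ := hp (some z) ((mem_of_mem_map_support hsup).1 hz)
    obtain rfl : t = z := by injection hts
    exact htA
  · rintro ⟨⟨a, ha⟩, h⟩
    refine ⟨⟨some a, a, ha, rfl⟩, fun x hx y hy => ?_⟩
    obtain ⟨x', hx', rfl⟩ := hx
    obtain ⟨y', hy', rfl⟩ := hy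
    obtain ⟨p, hp⟩ := h x' hx' y' hy'
    refine ⟨p.map (homUp G u w), fun z hz => ?_⟩
    replace hz : z ∈ (p.map (homUp G u w)).support := hz
    rw [Walk.support_map] at hz
    obtain ⟨t, ht, rfl⟩ := List.mem_map.1 hz
    exact ⟨t, hp t ht, rfl⟩

lemma iota_twoConn_iff {A : Set V} :
    TwoConnSet (addVertexTwoEdges G u w) (some '' A) ↔ TwoConnSet G A := by
  have himg : ∀ (s : Set V) (t : V), some '' s = {some t} ↔ s = {t} := by
    intro s t
    constructor
    · intro h
      apply (Set.image_injective.mpr (Option.some_injective V))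
      rw [h, Set.image_singleton]
    · rintro rfl
      exact Set.image_singleton
  constructor
  · rintro ⟨hne, hconn, hdel⟩
    refine ⟨?_, iota_connected_iff.1 hconn, fun t ht => ?_⟩
    · obtain ⟨o, a, ha, rfl⟩ := hne
      exact ⟨a, ha⟩
    · rcases hdel (some t) ⟨t, ht, rfl⟩ with h1 | h2
      · exact Or.inl ((himg A t).1 h1)
      · right
        rw [← Set.image_singleton, ← Set.image_diff (Option.some_injective V)] at h2
        exact iota_connected_iff.1 h2
  · rintro ⟨hne, hconn, hdel⟩
    refine ⟨⟨some hne.choose, hne.choose, hne.choose_spec, rfl⟩,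
      iota_connected_iff.2 hconn, ?_⟩
    rintro o ⟨t, ht, rfl⟩
    rcases hdel t ht with h1 | h2
    · exact Or.inl (by rw [h1, Set.image_singleton])
    · right
      rw [← Set.image_singleton, ← Set.image_diff (Option.some_injective V)]
      exact iota_connected_iff.2 h2

end OptionGraph

end K4Aux


namespace K4Aux

structure Setting {V : Type*} (G : SimpleGraph V) (v u w : V) (b1 b2 : Set V) : Prop where
  hu : G.Adj u v
  hw : G.Adj w v
  hb1 : IsBlock G b1
  hb2 : IsBlock G b2
  hbne : b1 ≠ b2
  hub1 : u ∈ b1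
  hvb1 : v ∈ b1
  hwb2 : w ∈ b2
  hvb2 : v ∈ b2

section Main

variable {V : Type*} {G : SimpleGraph V} {v u w : V} {b1 b2 : Set V}

lemma Setting.w_nmem_b1 (S : Setting G v u w b1 b2) : w ∉ b1 := by
  intro hw1
  have hU : TwoConnSet G (b1 ∪ b2) :=
    TwoConnSet.union' S.hb1.1 S.hb2.1 hw1 S.hwb2 S.hvb1 S.hvb2 S.hw.ne
  have e1 := S.hb1.2 _ Set.subset_union_left hU
  have e2 := S.hb2.2 _ Set.subset_union_right hU
  exact S.hbne (e1.symm.trans e2)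

lemma Setting.u_nmem_b2 (S : Setting G v u w b1 b2) : u ∉ b2 := by
  intro hu2
  have hU : TwoConnSet G (b1 ∪ b2) :=
    TwoConnSet.union' S.hb1.1 S.hb2.1 S.hub1 hu2 S.hvb1 S.hvb2 S.hu.ne
  have e1 := S.hb1.2 _ Set.subset_union_left hU
  have e2 := S.hb2.2 _ Set.subset_union_right hU
  exact S.hbne (e1.symm.trans e2)

lemma Setting.une_w (S : Setting G v u w b1 b2) : u ≠ w :=
  fun h => S.u_nmem_b2 (h ▸ S.hwb2)

lemma Setting.b1_del_conn (S : Setting G v u w b1 b2) (y : V) :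
    (G.induce (b1 \ {y})).Connected :=
  del_connected S.hb1.1 S.hub1 S.hvb1 S.hu.ne y

lemma Setting.b2_del_conn (S : Setting G v u w b1 b2) (y : V) :
    (G.induce (b2 \ {y})).Connected :=
  del_connected S.hb2.1 S.hwb2 S.hvb2 S.hw.ne y

lemma Setting.lemS (S : Setting G v u w b1 b2) (p0 : G.Walk u w) : v ∈ p0.support := by
  classical
  by_contra hv
  set P : G.Walk u w := (p0.toPath : G.Walk u w) with hPdef
  have hPpath : P.IsPath := p0.toPath.2
  have hvP : v ∉ P.support := fun h => hv (p0.support_toPath_subset h)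
  set W0 : G.Walk v w := Walk.cons S.hu.symm P with hW0
  set C : Set V := {z | z ∈ W0.support} with hC
  have hW0supp : W0.support = v :: P.support := rfl
  have huC : u ∈ C := by
    show u ∈ W0.support
    rw [hW0supp]; exact List.mem_cons_of_mem _ P.start_mem_support
  have hvC : v ∈ C := by show v ∈ W0.support; rw [hW0supp]; exact List.mem_cons_self
  have hwC : w ∈ C := by
    show w ∈ W0.support
    rw [hW0supp]; exact List.mem_cons_of_mem _ P.end_mem_support
  have hCtc : TwoConnSet G C := by
    refine ⟨⟨v, hvC⟩, induce_support_connected W0, ?_⟩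
    intro t ht
    right
    by_cases htv : t = v
    · subst htv
      have hCt : C \ {t} = {z | z ∈ P.support} := by
        ext z
        simp only [hC, Set.mem_diff, Set.mem_setOf_eq, Set.mem_singleton_iff, hW0supp,
          List.mem_cons]
        constructor
        · rintro ⟨h1 | h1, h2⟩
          · exact absurd h1 h2
          · exact h1
        · intro h1
          exact ⟨Or.inr h1, fun he => hvP (he ▸ h1)⟩
      rw [hCt]
      exact induce_support_connected P
    · have htP : t ∈ P.support := by
        have h' : t ∈ W0.support := ht
        rw [hW0supp] at h'
        rcases List.mem_cons.1 h' with h1 | h1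
        · exact absurd h1 htv
        · exact h1
      have hs_path := hPpath.takeUntil htP
      have hr_path := hPpath.dropUntil htP
      set s := P.takeUntil t htP with hs
      set r := P.dropUntil t htP with hr
      set A1 : Set V := ({z | z ∈ s.support} \ {t}) ∪ {v} with hA1
      set A2 : Set V := ({z | z ∈ r.support} \ {t}) ∪ {v} with hA2
      have hsub_s : ∀ {z}, z ∈ s.support → z ∈ P.support :=
        fun hz => P.support_takeUntil_subset htP hz
      have hsub_r : ∀ {z}, z ∈ r.support → z ∈ P.support :=
        fun hz => P.support_dropUntil_subset htP hz
      have hset : C \ {t} = A1 ∪ A2 := by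
        ext z
        simp only [hC, hA1, hA2, Set.mem_diff, Set.mem_union, Set.mem_setOf_eq,
          Set.mem_singleton_iff, hW0supp, List.mem_cons]
        constructor
        · rintro ⟨h1 | h1, h2⟩
          · exact Or.inl (Or.inr h1)
          · rw [← P.take_spec htP, Walk.mem_support_append_iff] at h1
            rcases h1 with h1 | h1
            · exact Or.inl (Or.inl ⟨h1, h2⟩)
            · exact Or.inr (Or.inl ⟨h1, h2⟩)
        · rintro ((⟨h1, h2⟩ | h1) | (⟨h1, h2⟩ | h1))
          · exact ⟨Or.inr (hsub_s h1), h2⟩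
          · exact ⟨Or.inl h1, by rw [h1]; exact fun he => htv he.symm⟩
          · exact ⟨Or.inr (hsub_r h1), h2⟩
          · exact ⟨Or.inl h1, by rw [h1]; exact fun he => htv he.symm⟩
      rw [hset]
      have hA1conn : (G.induce A1).Connected := by
        by_cases htu : t = u
        · subst htu
          have hnil : s = Walk.nil := (Walk.isPath_iff_eq_nil (p := s)).1 hs_path
          have hA1v : A1 = {v} := by
            rw [hA1, hnil]
            ext z
            simp only [Walk.support_nil, List.mem_singleton, Set.mem_union, Set.mem_diff,
              Set.mem_setOf_eq, Set.mem_singleton_iff]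
            constructor
            · rintro (⟨h1, h2⟩ | h1)
              · exact absurd h1 h2
              · exact h1
            · intro h1; exact Or.inr h1
          rw [hA1v]
          exact induce_singleton_connected v
        · refine induce_connected_of_hub (h := v) (Or.inr rfl) ?_
          intro x hx
          rcases hx with ⟨hxs, hxt⟩ | hxv
          · refine ⟨((s.takeUntil x hxs).reverse).append (Walk.cons S.hu Walk.nil),
              fun z hz => ?_⟩
            rw [Walk.mem_support_append_iff] at hz
            rcases hz with h1 | h2
            · rw [Walk.support_reverse, List.mem_reverse] at h1
              refine Or.inl ⟨s.support_takeUntil_subset hxs h1, ?_⟩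
              intro he
              exact not_end_mem_takeUntil hs_path hxs hxt (he ▸ h1)
            · rcases (by simpa using h2 : z = u ∨ z = v) with rfl | rfl
              · exact Or.inl ⟨s.start_mem_support, Ne.symm htu⟩
              · exact Or.inr rfl
          · obtain rfl : x = v := hxv
            refine ⟨Walk.nil, fun z hz => ?_⟩
            obtain rfl : z = x := by simpa using hz
            exact Or.inr rfl
      have hA2conn : (G.induce A2).Connected := by
        by_cases htw : t = w
        · subst htw
          have hnil : r = Walk.nil := (Walk.isPath_iff_eq_nil (p := r)).1 hr_path
          have hA2v : A2 = {v} := by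
            rw [hA2, hnil]
            ext z
            simp only [Walk.support_nil, List.mem_singleton, Set.mem_union, Set.mem_diff,
              Set.mem_setOf_eq, Set.mem_singleton_iff]
            constructor
            · rintro (⟨h1, h2⟩ | h1)
              · exact absurd h1 h2
              · exact h1
            · intro h1; exact Or.inr h1
          rw [hA2v]
          exact induce_singleton_connected v
        · refine induce_connected_of_hub (h := v) (Or.inr rfl) ?_
          intro x hx
          rcases hx with ⟨hxr, hxt⟩ | hxv
          · refine ⟨(r.dropUntil x hxr).append (Walk.cons S.hw Walk.nil), fun z hz => ?_⟩
            rw [Walk.mem_support_append_iff] at hz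
            rcases hz with h1 | h2
            · refine Or.inl ⟨r.support_dropUntil_subset hxr h1, ?_⟩
              intro he
              exact not_start_mem_dropUntil hr_path hxr (fun h' => hxt h') (he ▸ h1)
            · rcases (by simpa using h2 : z = w ∨ z = v) with rfl | rfl
              · exact Or.inl ⟨r.end_mem_support, Ne.symm htw⟩
              · exact Or.inr rfl
          · obtain rfl : x = v := hxv
            refine ⟨Walk.nil, fun z hz => ?_⟩
            obtain rfl : z = x := by simpa using hz
            exact Or.inr rfl
      exact induce_union_connected hA1conn.preconnected hA2conn.preconnected ⟨v, Or.inr rfl, Or.inr rfl⟩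
  have hUnion : TwoConnSet G (b1 ∪ C) :=
    TwoConnSet.union' S.hb1.1 hCtc S.hub1 huC S.hvb1 hvC S.hu.ne
  have heq := S.hb1.2 (b1 ∪ C) Set.subset_union_left hUnion
  exact S.w_nmem_b1 (heq ▸ (Or.inr hwC : w ∈ b1 ∪ C))

lemma Setting.lemS' (S : Setting G v u w b1 b2) {x y : V}
    (h : (x = u ∧ y = w) ∨ (x = w ∧ y = u)) (p : G.Walk x y) : v ∈ p.support := by
  rcases h with ⟨rfl, rfl⟩ | ⟨rfl, rfl⟩
  · exact S.lemS p
  · have := S.lemS p.reverse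
    rwa [Walk.support_reverse, List.mem_reverse] at this

lemma Setting.no_cross (S : Setting G v u w b1 b2) {a c : V}
    (ha : a ∈ b1) (hav : a ≠ v) (hc : c ∈ b2) (hcb1 : c ∉ b1) : ¬ G.Adj a c := by
  intro hadj
  have hcv : c ≠ v := fun h => hcb1 (h ▸ S.hvb1)
  obtain ⟨-, H1⟩ := induce_connected_iff'.1 (S.b1_del_conn v)
  obtain ⟨p1, hp1⟩ := H1 u ⟨S.hub1, S.hu.ne⟩ a ⟨ha, hav⟩
  obtain ⟨-, H2⟩ := induce_connected_iff'.1 (S.b2_del_conn v)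
  obtain ⟨p2, hp2⟩ := H2 c ⟨hc, hcv⟩ w ⟨S.hwb2, S.hw.ne⟩
  have hv := S.lemS (p1.append (Walk.cons hadj p2))
  rw [Walk.mem_support_append_iff] at hv
  rcases hv with h1 | h2
  · exact (hp1 v h1).2 rfl
  · rcases (by simpa using h2 : v = a ∨ v ∈ p2.support) with h3 | h3
    · exact hav h3.symm
    · exact (hp2 v h3).2 rfl

lemma Setting.cross_mem (S : Setting G v u w b1 b2) :
    ∀ {a c : V} (p : G.Walk a c), (∀ z ∈ p.support, z ∈ b1 ∪ b2) → a ∈ b1 → a ≠ v →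
      c ∉ b1 → v ∈ p.support := by
  intro a c p
  induction p with
  | nil => intro _ ha _ hc; exact absurd ha hc
  | @cons a b c hadj q ih =>
      intro hsup ha hav hc
      by_cases hbv : b = v
      · subst hbv
        exact List.mem_cons_of_mem _ q.start_mem_support
      · by_cases hb1 : b ∈ b1
        · exact List.mem_cons_of_mem _
            (ih (fun z hz => hsup z (List.mem_cons_of_mem _ hz)) hb1 hbv hc)
        · have hb2 : b ∈ b2 := by
            rcases hsup b (by simp) with h | h
            · exact absurd h hb1
            · exact h
          exact absurd hadj (S.no_cross ha hav hb2 hb1)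

lemma pair_ne {a b c d : Fin 4} (hbd : b ≠ d) (hbc : b ≠ c) :
    ({a, b} : Set (Fin 4)) ≠ {c, d} := by
  intro h
  have hb : b ∈ ({c, d} : Set (Fin 4)) := h ▸ (by simp : b ∈ ({a, b} : Set (Fin 4)))
  rcases (by simpa using hb : b = c ∨ b = d) with h' | h'
  · exact hbc h'
  · exact hbd h'

lemma pair_eq_cases {i j k l : Fin 4} (hij : i ≠ j) (h : ({i, j} : Set (Fin 4)) = {k, l}) :
    (i = k ∧ j = l) ∨ (i = l ∧ j = k) := by
  have hi : i = k ∨ i = l := by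
    have : i ∈ ({k, l} : Set (Fin 4)) := h ▸ (by simp : i ∈ ({i, j} : Set (Fin 4)))
    simpa using this
  have hj : j = k ∨ j = l := by
    have : j ∈ ({k, l} : Set (Fin 4)) := h ▸ (by simp : j ∈ ({i, j} : Set (Fin 4)))
    simpa using this
  rcases hi with rfl | rfl
  · rcases hj with h' | h'
    · exact absurd h'.symm hij
    · exact Or.inl ⟨rfl, h'⟩
  · rcases hj with h' | h'
    · exact Or.inr ⟨rfl, h'⟩
    · exact absurd h'.symm hij

lemma mem_pair_inter {t a b c d : Fin 4} (h : t ∈ ({a, b} : Set (Fin 4)) ∩ {c, d}) :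
    (t = a ∨ t = b) ∧ (t = c ∨ t = d) := by
  obtain ⟨h1, h2⟩ := h
  exact ⟨by simpa using h1, by simpa using h2⟩

lemma Setting.partA (S : Setting G v u w b1 b2) (hSP : ¬HasK4Subdivision G) :
    ¬HasK4Subdivision (addVertexTwoEdges G u w) := by
  classical
  rintro ⟨f, finj, W, hpath, hdisj⟩
  have hfnone : ∀ i, f i ≠ none := by
    intro i hi
    obtain ⟨j, k, l, hji, hki, hli, hjk, hjl, hkl⟩ :
        ∃ j k l : Fin 4, j ≠ i ∧ k ≠ i ∧ l ≠ i ∧ j ≠ k ∧ j ≠ l ∧ k ≠ l := by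
      have : ∀ i : Fin 4, ∃ j k l : Fin 4, j ≠ i ∧ k ≠ i ∧ l ≠ i ∧ j ≠ k ∧ j ≠ l ∧ k ≠ l := by
        decide
      exact this i
    have hsv : ∀ m : Fin 4, m ≠ i →
        ∃ s, s ∈ (W i m).support ∧ (s = some u ∨ s = some w) := by
      intro m hmi
      have hne : f i ≠ f m := fun h => hmi (finj h).symm
      obtain ⟨s, hs, hadj⟩ := second_vertex (W i m) hne
      rw [hi] at hadj
      exact ⟨s, hs, adj2_none_iff.1 hadj⟩
    obtain ⟨sj, hsj, hsju⟩ := hsv j hji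
    obtain ⟨sk, hsk, hsku⟩ := hsv k hki
    obtain ⟨sl, hsl, hslu⟩ := hsv l hli
    have hpair : ∃ (m n : Fin 4) (s : Option V), m ≠ i ∧ n ≠ i ∧ m ≠ n ∧ s ≠ none ∧
        s ∈ (W i m).support ∧ s ∈ (W i n).support := by
      rcases hsju with rfl | rfl <;> rcases hsku with rfl | rfl <;> rcases hslu with h3 | h3
      · exact ⟨j, k, _, hji, hki, hjk, by simp, hsj, hsk⟩
      · exact ⟨j, k, _, hji, hki, hjk, by simp, hsj, hsk⟩
      · exact ⟨j, l, _, hji, hli, hjl, by simp, hsj, h3 ▸ hsl⟩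
      · exact ⟨k, l, _, hki, hli, hkl, by simp, hsk, h3 ▸ hsl⟩
      · exact ⟨k, l, _, hki, hli, hkl, by simp, hsk, h3 ▸ hsl⟩
      · exact ⟨j, l, _, hji, hli, hjl, by simp, hsj, h3 ▸ hsl⟩
      · exact ⟨j, k, _, hji, hki, hjk, by simp, hsj, hsk⟩
      · exact ⟨j, k, _, hji, hki, hjk, by simp, hsj, hsk⟩
    obtain ⟨m, n, s, hmi, hni, hmn, hsnone, hm, hn⟩ := hpair
    obtain ⟨t, ht, hts⟩ :=
      hdisj i m i n (Ne.symm hmi) (Ne.symm hni) (pair_ne hmn hmi) s hm hn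
    obtain ⟨ht1, ht2⟩ := mem_pair_inter ht
    have hti : t = i := by
      rcases ht1 with rfl | rfl
      · rfl
      · rcases ht2 with h' | h'
        · exact absurd h' hmi
        · exact absurd h' hmn
    rw [hti, hi] at hts
    exact hsnone hts.symm
  have hzuniq : ∀ i j k l : Fin 4, i ≠ j → k ≠ l → ({i, j} : Set (Fin 4)) ≠ {k, l} →
      none ∈ (W i j).support → none ∉ (W k l).support := by
    intro i j k l hij hkl hne h1 h2
    obtain ⟨t, -, hts⟩ := hdisj i j k l hij hkl hne none h1 h2
    exact hfnone t hts
  have hg : ∀ i, ∃ gi : V, f i = some gi := fun i => Option.ne_none_iff_exists'.1 (hfnone i)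
  choose g hgs using hg
  have ginj : Function.Injective g := fun i j h => finj (by rw [hgs i, hgs j, h])
  have hKEY : (∀ i j : Fin 4, ∃ q : G.Walk (g i) (g j), (i ≠ j → q.IsPath) ∧
      ∀ z ∈ q.support, some z ∈ (W i j).support ∨ some z ∈ (W j i).support) → False := by
    intro hfam
    choose Q hQ1 hQ2 using hfam
    apply hSP
    refine ⟨g, ginj, Q, fun i j h => hQ1 i j h, ?_⟩
    intro i j k l hij hkl hne x hx1 hx2
    have hmini : some x ∈ f '' (({i, j} : Set (Fin 4)) ∩ {k, l}) := by
      rcases hQ2 i j x hx1 with h1 | h1 <;> rcases hQ2 k l x hx2 with h2 | h2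
      · exact hdisj i j k l hij hkl hne _ h1 h2
      · have := hdisj i j l k hij (Ne.symm hkl) (by rwa [Set.pair_comm l k]) _ h1 h2
        rwa [Set.pair_comm l k] at this
      · have := hdisj j i k l (Ne.symm hij) hkl (by rwa [Set.pair_comm j i]) _ h1 h2
        rwa [Set.pair_comm j i] at this
      · have := hdisj j i l k (Ne.symm hij) (Ne.symm hkl)
          (by rw [Set.pair_comm j i, Set.pair_comm l k]; exact hne) _ h1 h2
        rwa [Set.pair_comm j i, Set.pair_comm l k] at this
    obtain ⟨t, ht, hts⟩ := hmini
    refine ⟨t, ht, ?_⟩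
    have := (hgs t) ▸ hts
    injection this
  have hdiag : ∀ i : Fin 4, ∃ q : G.Walk (g i) (g i), ((i : Fin 4) ≠ i → q.IsPath) ∧
      ∀ z ∈ q.support, some z ∈ (W i i).support ∨ some z ∈ (W i i).support := by
    intro i
    refine ⟨Walk.nil, fun h => absurd rfl h, fun z hz => ?_⟩
    obtain rfl : z = g i := by simpa using hz
    exact Or.inl (by rw [← hgs i]; exact (W i i).start_mem_support)
  by_cases hcase : ∃ i j : Fin 4, i ≠ j ∧ none ∈ (W i j).support
  · obtain ⟨i0, j0, hne0, hz0⟩ := hcase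
    have hW0path := hpath i0 j0 hne0
    obtain ⟨x, y, h1, h2, p1, p2, hdecomp⟩ :=
      split_at_none (W i0 j0) (hfnone i0) (hfnone j0) hz0
    have hsupp0 : (W i0 j0).support = p1.support ++ (none :: p2.support) := by
      rw [hdecomp, Walk.support_append]
      simp [Walk.support_cons]
    have hnodup0 : (p1.support ++ (none :: p2.support)).Nodup :=
      hsupp0 ▸ hW0path.support_nodup
    rw [List.nodup_append] at hnodup0
    obtain ⟨hnod1, hnod2', hdisj0⟩ := hnodup0
    have hnonep1 : none ∉ p1.support := fun h => hdisj0 _ h _ List.mem_cons_self rfl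
    have hnonep2 : none ∉ p2.support := (List.nodup_cons.1 hnod2').1
    have hnod2 : p2.support.Nodup := (List.nodup_cons.1 hnod2').2
    have hdisj12 : ∀ z, z ∈ p1.support → z ∈ p2.support → False :=
      fun z h1' h2' => hdisj0 _ h1' _ (List.mem_cons_of_mem _ h2') rfl
    have hxuw : x = u ∨ x = w := by
      rcases adj2_none_iff.1 h1.symm with h' | h'
      · exact Or.inl (by injection h')
      · exact Or.inr (by injection h')
    have hyuw : y = u ∨ y = w := by
      rcases adj2_none_iff.1 h2 with h' | h'
      · exact Or.inl (by injection h')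
      · exact Or.inr (by injection h')
    have hxy : x ≠ y := by
      intro h
      exact hdisj12 (some x) p1.end_mem_support (h ▸ p2.start_mem_support)
    have hxycase : (x = u ∧ y = w) ∨ (x = w ∧ y = u) := by
      rcases hxuw with rfl | rfl <;> rcases hyuw with rfl | rfl
      · exact absurd rfl hxy
      · exact Or.inl ⟨rfl, rfl⟩
      · exact Or.inr ⟨rfl, rfl⟩
      · exact absurd rfl hxy
    obtain ⟨x1, x2, q1, hx1, hx2, hsup1⟩ := pushdown p1 hnonep1
    obtain rfl : g i0 = x1 := by rw [hgs i0] at hx1; injection hx1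
    obtain rfl : x = x2 := by injection hx2
    obtain ⟨y1, y2, q2, hy1, hy2, hsup2⟩ := pushdown p2 hnonep2
    obtain rfl : y = y1 := by injection hy1
    obtain rfl : g j0 = y2 := by rw [hgs j0] at hy2; injection hy2
    have hmem1 : ∀ {z : V}, z ∈ q1.support → some z ∈ p1.support :=
      fun hz => hsup1 ▸ List.mem_map_of_mem (f := some) hz
    have hmem2 : ∀ {z : V}, z ∈ q2.support → some z ∈ p2.support :=
      fun hz => hsup2 ▸ List.mem_map_of_mem (f := some) hz
    have hmem1' : ∀ {z : V}, some z ∈ p1.support → z ∈ q1.support := by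
      intro z hz
      rw [← hsup1] at hz
      obtain ⟨t, ht, hts⟩ := List.mem_map.1 hz
      obtain rfl : t = z := by injection hts
      exact ht
    have hmem2' : ∀ {z : V}, some z ∈ p2.support → z ∈ q2.support := by
      intro z hz
      rw [← hsup2] at hz
      obtain ⟨t, ht, hts⟩ := List.mem_map.1 hz
      obtain rfl : t = z := by injection hts
      exact ht
    have hq1nod : q1.support.Nodup := List.Nodup.of_map some (by rw [hsup1]; exact hnod1)
    have hq2nod : q2.support.Nodup := List.Nodup.of_map some (by rw [hsup2]; exact hnod2)
    have hq12 : ∀ z, z ∈ q1.support → z ∈ q2.support → False :=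
      fun z hz1 hz2 => hdisj12 (some z) (hmem1 hz1) (hmem2 hz2)
    have hotherW : ∀ i j : Fin 4, i ≠ j → ¬(i = i0 ∧ j = j0) → ¬(i = j0 ∧ j = i0) →
        ∃ q : G.Walk (g i) (g j), q.IsPath ∧
          (∀ z ∈ q.support, some z ∈ (W i j).support) ∧
          (∀ z : V, some z ∈ (W i j).support → z ∈ q.support) := by
      intro i j hij hij0 hji0
      have hsets : ({i0, j0} : Set (Fin 4)) ≠ {i, j} := by
        intro he
        rcases pair_eq_cases hne0 he with ⟨ha, hb⟩ | ⟨ha, hb⟩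
        · exact hij0 ⟨ha.symm, hb.symm⟩
        · exact hji0 ⟨hb.symm, ha.symm⟩
      have hn : none ∉ (W i j).support := hzuniq i0 j0 i j hne0 hij hsets hz0
      obtain ⟨a, b, q, ha, hb, hsup⟩ := pushdown (W i j) hn
      obtain rfl : g i = a := by rw [hgs i] at ha; injection ha
      obtain rfl : g j = b := by rw [hgs j] at hb; injection hb
      refine ⟨q, (Walk.isPath_def q).2 (List.Nodup.of_map some
        (by rw [hsup]; exact (hpath i j hij).support_nodup)),
        fun z hz => hsup ▸ List.mem_map_of_mem (f := some) hz, ?_⟩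
      intro z hz
      rw [← hsup] at hz
      obtain ⟨t, ht, hts⟩ := List.mem_map.1 hz
      obtain rfl : t = z := by injection hts
      exact ht
    by_cases hv1 : v ∈ q1.support
    · -- Case (a): reroute through v using edge v-y
      have havy : G.Adj v y := by
        rcases hxycase with ⟨-, rfl⟩ | ⟨-, rfl⟩
        · exact S.hw.symm
        · exact S.hu.symm
      have hq1path : q1.IsPath := (Walk.isPath_def q1).2 hq1nod
      set r1 := q1.takeUntil v hv1 with hr1
      have hr1path : r1.IsPath := hq1path.takeUntil hv1
      set N : G.Walk (g i0) (g j0) := r1.append (Walk.cons havy q2) with hN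
      have hNsupp : ∀ z ∈ N.support, some z ∈ (W i0 j0).support := by
        intro z hz
        rw [hN, Walk.mem_support_append_iff] at hz
        have hz' : z ∈ q1.support ∨ z ∈ q2.support := by
          rcases hz with h | h
          · exact Or.inl (q1.support_takeUntil_subset hv1 h)
          · rcases (by simpa using h : z = v ∨ z ∈ q2.support) with rfl | h'
            · exact Or.inl hv1
            · exact Or.inr h'
        rw [hsupp0]
        rcases hz' with h | h
        · exact List.mem_append_left _ (hmem1 h)
        · exact List.mem_append_right _ (List.mem_cons_of_mem _ (hmem2 h))
      have hNpath : N.IsPath := by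
        rw [Walk.isPath_def, hN, Walk.support_append]
        simp only [Walk.support_cons, List.tail_cons]
        refine List.Nodup.append hr1path.support_nodup hq2nod ?_
        intro z hz1 hz2
        exact hq12 z (q1.support_takeUntil_subset hv1 hz1) hz2
      apply hKEY
      intro i j
      by_cases hij : i = j
      · subst hij; exact hdiag i
      by_cases hij0 : i = i0 ∧ j = j0
      · obtain ⟨rfl, rfl⟩ := hij0
        exact ⟨N, fun _ => hNpath, fun z hz => Or.inl (hNsupp z hz)⟩
      by_cases hji0 : i = j0 ∧ j = i0
      · obtain ⟨rfl, rfl⟩ := hji0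
        exact ⟨N.reverse, fun _ => (Walk.isPath_reverse_iff N).2 hNpath, fun z hz =>
          Or.inr (hNsupp z (by rwa [Walk.support_reverse, List.mem_reverse] at hz))⟩
      · obtain ⟨q, hqp, hqs, -⟩ := hotherW i j hij hij0 hji0
        exact ⟨q, fun _ => hqp, fun z hz => Or.inl (hqs z hz)⟩
    · by_cases hv2 : v ∈ q2.support
      · -- Case (b): reroute using edge x-v
        have haxv : G.Adj x v := by
          rcases hxycase with ⟨rfl, -⟩ | ⟨rfl, -⟩
          · exact S.hu
          · exact S.hw
        have hq2path : q2.IsPath := (Walk.isPath_def q2).2 hq2nod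
        set r2 := q2.dropUntil v hv2 with hr2
        have hr2path : r2.IsPath := hq2path.dropUntil hv2
        set N : G.Walk (g i0) (g j0) := q1.append (Walk.cons haxv r2) with hN
        have hNsupp : ∀ z ∈ N.support, some z ∈ (W i0 j0).support := by
          intro z hz
          rw [hN, Walk.mem_support_append_iff] at hz
          have hz' : z ∈ q1.support ∨ z ∈ q2.support := by
            rcases hz with h | h
            · exact Or.inl h
            · rcases (by simpa using h : z = x ∨ z ∈ r2.support) with rfl | h'
              · exact Or.inl q1.end_mem_support
              · exact Or.inr (q2.support_dropUntil_subset hv2 h')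
          rw [hsupp0]
          rcases hz' with h | h
          · exact List.mem_append_left _ (hmem1 h)
          · exact List.mem_append_right _ (List.mem_cons_of_mem _ (hmem2 h))
        have hNpath : N.IsPath := by
          rw [Walk.isPath_def, hN, Walk.support_append]
          simp only [Walk.support_cons, List.tail_cons]
          refine List.Nodup.append hq1nod hr2path.support_nodup ?_
          intro z hz1 hz2
          exact hq12 z hz1 (q2.support_dropUntil_subset hv2 hz2)
        apply hKEY
        intro i j
        by_cases hij : i = j
        · subst hij; exact hdiag i
        by_cases hij0 : i = i0 ∧ j = j0
        · obtain ⟨rfl, rfl⟩ := hij0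
          exact ⟨N, fun _ => hNpath, fun z hz => Or.inl (hNsupp z hz)⟩
        by_cases hji0 : i = j0 ∧ j = i0
        · obtain ⟨rfl, rfl⟩ := hji0
          exact ⟨N.reverse, fun _ => (Walk.isPath_reverse_iff N).2 hNpath, fun z hz =>
            Or.inr (hNsupp z (by rwa [Walk.support_reverse, List.mem_reverse] at hz))⟩
        · obtain ⟨q, hqp, hqs, -⟩ := hotherW i j hij hij0 hji0
          exact ⟨q, fun _ => hqp, fun z hz => Or.inl (hqs z hz)⟩
      · -- Case (c): route around, contradiction with lemS'
        obtain ⟨m, n, hmn, hmi0, hmj0, hni0, hnj0⟩ :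
            ∃ m n : Fin 4, m ≠ n ∧ m ≠ i0 ∧ m ≠ j0 ∧ n ≠ i0 ∧ n ≠ j0 := by
          have : ∀ a b : Fin 4, a ≠ b →
              ∃ m n : Fin 4, m ≠ n ∧ m ≠ a ∧ m ≠ b ∧ n ≠ a ∧ n ≠ b := by decide
          exact this i0 j0 hne0
        have hgv1 : v ≠ g i0 := fun h => hv1 (h ▸ q1.start_mem_support)
        have hgv2 : v ≠ g j0 := fun h => hv2 (h ▸ q2.end_mem_support)
        have hget : ∀ a b : Fin 4, a ≠ b → ¬(a = i0 ∧ b = j0) → ¬(a = j0 ∧ b = i0) →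
            some v ∉ (W a b).support → ∃ q : G.Walk (g a) (g b), v ∉ q.support := by
          intro a b hab h1 h2 hnv
          obtain ⟨q, -, hq, -⟩ := hotherW a b hab h1 h2
          exact ⟨q, fun hvq => hnv (hq v hvq)⟩
        have hfv : ∀ t : Fin 4, f t = some v → ¬(t = i0) ∧ ¬(t = j0) := by
          intro t ht
          have hgt : g t = v := by
            have h' := (hgs t) ▸ ht
            injection h'
          constructor
          · rintro rfl
            exact hgv1 hgt.symm
          · rintro rfl
            exact hgv2 hgt.symm
        have hmi0' : i0 ≠ m := Ne.symm hmi0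
        have hni0' : i0 ≠ n := Ne.symm hni0
        have hCD : ({m, j0} : Set (Fin 4)) ≠ {n, j0} := by
          intro he
          rcases pair_eq_cases hmj0 he with ⟨ha, hb⟩ | ⟨ha, hb⟩
          · exact hmn ha
          · exact hmj0 ha
        obtain ⟨R, hvR⟩ : ∃ R : G.Walk (g i0) (g j0), v ∉ R.support := by
          by_cases hroute1 : some v ∈ (W i0 m).support ∨ some v ∈ (W m j0).support
          · have hvin : some v ∉ (W i0 n).support := by
              intro hvn
              rcases hroute1 with h | h
              · obtain ⟨t, ht, hts⟩ := hdisj i0 m i0 n hmi0' hni0' (pair_ne hmn hmi0) _ h hvn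
                obtain ⟨hp1, hp2⟩ := mem_pair_inter ht
                obtain ⟨hti0, htj0⟩ := hfv t hts
                rcases hp1 with rfl | rfl
                · exact hti0 rfl
                · rcases hp2 with h' | h'
                  · exact hmi0 h'
                  · exact hmn h'
              · obtain ⟨t, ht, hts⟩ := hdisj m j0 i0 n hmj0 hni0'
                  (pair_ne (Ne.symm hnj0) (Ne.symm hne0)) _ h hvn
                obtain ⟨hp1, hp2⟩ := mem_pair_inter ht
                obtain ⟨hti0, htj0⟩ := hfv t hts
                rcases hp1 with rfl | rfl
                · rcases hp2 with h' | h'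
                  · exact hmi0 h'
                  · exact hmn h'
                · exact htj0 rfl
            have hvnj : some v ∉ (W n j0).support := by
              intro hvn
              rcases hroute1 with h | h
              · obtain ⟨t, ht, hts⟩ := hdisj i0 m n j0 hmi0' hnj0 (pair_ne hmj0 hmn) _ h hvn
                obtain ⟨hp1, hp2⟩ := mem_pair_inter ht
                obtain ⟨hti0, htj0⟩ := hfv t hts
                rcases hp1 with rfl | rfl
                · exact hti0 rfl
                · rcases hp2 with h' | h'
                  · exact hmn h'
                  · exact hmj0 h'
              · obtain ⟨t, ht, hts⟩ := hdisj m j0 n j0 hmj0 hnj0 hCD _ h hvn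
                obtain ⟨hp1, hp2⟩ := mem_pair_inter ht
                obtain ⟨hti0, htj0⟩ := hfv t hts
                rcases hp1 with rfl | rfl
                · rcases hp2 with h' | h'
                  · exact hmn h'
                  · exact hmj0 h'
                · exact htj0 rfl
            obtain ⟨R1, hR1⟩ := hget i0 n hni0' (fun h => hnj0 h.2) (fun h => hne0 h.1) hvin
            obtain ⟨R2, hR2⟩ := hget n j0 hnj0 (fun h => hni0 h.1) (fun h => hnj0 h.1) hvnj
            refine ⟨R1.append R2, fun hvr => ?_⟩
            rw [Walk.mem_support_append_iff] at hvr
            rcases hvr with h | h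
            · exact hR1 h
            · exact hR2 h
          · push_neg at hroute1
            obtain ⟨R1, hR1⟩ := hget i0 m hmi0' (fun h => hmj0 h.2) (fun h => hne0 h.1) hroute1.1
            obtain ⟨R2, hR2⟩ := hget m j0 hmj0 (fun h => hmi0 h.1) (fun h => hmj0 h.1) hroute1.2
            refine ⟨R1.append R2, fun hvr => ?_⟩
            rw [Walk.mem_support_append_iff] at hvr
            rcases hvr with h | h
            · exact hR1 h
            · exact hR2 h
        have hbig := S.lemS' hxycase (q1.reverse.append (R.append q2.reverse))
        rw [Walk.mem_support_append_iff] at hbig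
        rcases hbig with h | h
        · exact hv1 (by rwa [Walk.support_reverse, List.mem_reverse] at h)
        · rw [Walk.mem_support_append_iff] at h
          rcases h with h | h
          · exact hvR h
          · exact hv2 (by rwa [Walk.support_reverse, List.mem_reverse] at h)
  · push_neg at hcase
    apply hKEY
    intro i j
    by_cases hij : i = j
    · subst hij; exact hdiag i
    · have hn : none ∉ (W i j).support := hcase i j hij
      obtain ⟨a, b, q, ha, hb, hsup⟩ := pushdown (W i j) hn
      obtain rfl : g i = a := by rw [hgs i] at ha; injection ha
      obtain rfl : g j = b := by rw [hgs j] at hb; injection hb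
      refine ⟨q, fun _ => (Walk.isPath_def q).2 (List.Nodup.of_map some
        (by rw [hsup]; exact (hpath i j hij).support_nodup)),
        fun z hz => Or.inl (hsup ▸ List.mem_map_of_mem (f := some) hz)⟩

lemma Setting.P0 (S : Setting G v u w b1 b2) {C : Set (Option V)}
    (hC : TwoConnSet (addVertexTwoEdges G u w) C) (hnC : none ∈ C) :
    C ⊆ (some '' (b1 ∪ b2)) ∪ {none} := by
  classical
  set A : Set V := {t | some t ∈ C} with hA
  suffices hsub : A ⊆ b1 ∪ b2 by
    intro o ho
    cases o with
    | none => exact Or.inr rfl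
    | some t => exact Or.inl ⟨t, hsub ho, rfl⟩
  by_cases hA2 : ∃ t1 t2 : V, t1 ∈ A ∧ t2 ∈ A ∧ t1 ≠ t2
  · obtain ⟨t1, t2, ht1, ht2, ht12⟩ := hA2
    -- both u and w belong to A
    have hInA : ∀ s0 : V, s0 ∈ A ∨ (∃ t' ∈ A, t' ≠ s0) → True := fun _ _ => trivial
    have hCne : ∀ t : V, t ∈ A → C ≠ {some t} := by
      intro t ht he
      have : (none : Option V) ∈ ({some t} : Set (Option V)) := he ▸ hnC
      simp at this
    have hCne' : C ≠ {none} := by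
      intro he
      have : some t1 ∈ ({none} : Set (Option V)) := he ▸ ht1
      simp at this
    have hdelnone : ((addVertexTwoEdges G u w).induce (C \ {none})).Connected := by
      rcases hC.2.2 none hnC with h | h
      · exact absurd h hCne'
      · exact h
    have huworA : u ∈ A ∨ w ∈ A := by
      obtain ⟨c, hcC, hadj⟩ := neighbor_in_connected hC.2.1 hnC
        (ht1 : some t1 ∈ C) (by simp)
      rcases adj2_none_iff.1 hadj with rfl | rfl
      · exact Or.inl hcC
      · exact Or.inr hcC
    have hbothA : u ∈ A ∧ w ∈ A := by
      have haux : ∀ s0 : V, s0 ∈ A → (∀ o : Option V, (addVertexTwoEdges G u w).Adj none o →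
          o = some s0 ∨ (∃ s1 : V, o = some s1 ∧ (s1 ∈ A → False))) → False := by
        intro s0 hs0 hnbr
        -- remove some s0; none becomes isolated in a connected graph with ≥ 2 vertices
        have hconn : ((addVertexTwoEdges G u w).induce (C \ {some s0})).Connected := by
          rcases hC.2.2 (some s0) hs0 with h | h
          · exact absurd h (hCne s0 hs0)
          · exact h
        obtain ⟨t', ht', hts0⟩ : ∃ t' : V, t' ∈ A ∧ t' ≠ s0 := by
          rcases eq_or_ne t1 s0 with rfl | h
          · exact ⟨t2, ht2, fun h' => ht12 h'.symm⟩
          · exact ⟨t1, ht1, h⟩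
        obtain ⟨c, hcC, hadj⟩ := neighbor_in_connected hconn
          (⟨hnC, by simp⟩ : (none : Option V) ∈ C \ {some s0})
          (⟨ht', by simpa using fun h => hts0 h⟩ : some t' ∈ C \ {some s0}) (by simp)
        rcases hnbr c hadj with rfl | ⟨s1, rfl, hs1⟩
        · exact hcC.2 rfl
        · exact hs1 hcC.1
      constructor
      · rcases huworA with h | h
        · exact h
        · by_contra huA
          refine haux w h ?_
          intro o hadj
          rcases adj2_none_iff.1 hadj with rfl | rfl
          · exact Or.inr ⟨u, rfl, fun h' => huA h'⟩
          · exact Or.inl rfl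
      · rcases huworA with h | h
        · by_contra hwA
          refine haux u h ?_
          intro o hadj
          rcases adj2_none_iff.1 hadj with rfl | rfl
          · exact Or.inl rfl
          · exact Or.inr ⟨w, rfl, fun h' => hwA h'⟩
        · exact h
    obtain ⟨huA, hwA⟩ := hbothA
    -- A is connected, contains u and w, hence v ∈ A
    have hdelset : C \ {none} = some '' A := by
      ext o
      cases o with
      | none => simp
      | some t =>
          constructor
          · rintro ⟨h1, -⟩
            exact ⟨t, h1, rfl⟩
          · rintro ⟨t', ht', he⟩
            obtain rfl : t' = t := by injection he
            exact ⟨ht', by simp⟩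
    have hAconn : (G.induce A).Connected := by
      rw [← iota_connected_iff, ← hdelset]
      exact hdelnone
    have hvA : v ∈ A := by
      obtain ⟨-, H⟩ := induce_connected_iff'.1 hAconn
      obtain ⟨p, hp⟩ := H u huA w hwA
      exact hp v (S.lemS p)
    -- deleting any x ≠ v keeps A connected
    have hdelx : ∀ x : V, x ∈ A → x ≠ v → (G.induce (A \ {x})).Connected := by
      intro x hx hxv
      have hconn2 : ((addVertexTwoEdges G u w).induce (C \ {some x})).Connected := by
        rcases hC.2.2 (some x) hx with h | h
        · exact absurd h (hCne x hx)
        · exact h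
      rw [induce_connected_iff'] at hconn2 ⊢
      obtain ⟨-, H2⟩ := hconn2
      refine ⟨⟨v, hvA, by simpa using fun h => hxv h.symm⟩, ?_⟩
      intro a ha b hb
      obtain ⟨p, hp⟩ := H2 (some a) ⟨ha.1, by simpa using fun h => ha.2 h⟩
        (some b) ⟨hb.1, by simpa using fun h => hb.2 h⟩
      obtain ⟨q, hq⟩ := pushdown_with_none S.hu.symm S.hw.symm p
      refine ⟨q, fun z hz => ?_⟩
      rcases hq z hz with h | rfl
      · have h2 := hp _ h
        exact ⟨h2.1, fun hzx => h2.2 (by simpa using hzx)⟩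
      · exact ⟨hvA, by simpa using fun h => hxv h.symm⟩
    -- components of A \ {v}
    have hc1 : ∀ t ∈ A \ {v}, (t ∈ A \ {v} ∧ ∃ p : G.Walk u t, ∀ z ∈ p.support, z ∈ A \ {v}) ∨
        (t ∈ A \ {v} ∧ ∃ p : G.Walk w t, ∀ z ∈ p.support, z ∈ A \ {v}) := by
      intro t ht
      have hconn2 : ((addVertexTwoEdges G u w).induce (C \ {some v})).Connected := by
        rcases hC.2.2 (some v) hvA with h | h
        · exact absurd h (hCne v hvA)
        · exact h
      rw [induce_connected_iff'] at hconn2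
      obtain ⟨-, H2⟩ := hconn2
      obtain ⟨p, hp⟩ := H2 (some t) ⟨ht.1, by simpa using fun h => ht.2 h⟩
        none ⟨hnC, by simp⟩
      obtain ⟨s, q, hadj, hnq, hsubq⟩ := walk_avoid_end p (by simp)
      have hmemq : ∀ z : V, some z ∈ q.support → z ∈ A \ {v} := by
        intro z hz
        have h2 := hp _ (hsubq _ hz)
        exact ⟨h2.1, fun hzx => h2.2 (by simpa using hzx)⟩
      rcases adj2_none_iff'.1 hadj with rfl | rfl
      · obtain ⟨a, b, q', ha, hb, hsup⟩ := pushdown q hnq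
        obtain rfl : t = a := by injection ha
        obtain rfl : u = b := by injection hb
        left
        refine ⟨ht, q'.reverse, fun z hz => ?_⟩
        rw [Walk.support_reverse, List.mem_reverse] at hz
        exact hmemq z (hsup ▸ List.mem_map_of_mem (f := some) hz)
      · obtain ⟨a, b, q', ha, hb, hsup⟩ := pushdown q hnq
        obtain rfl : t = a := by injection ha
        obtain rfl : w = b := by injection hb
        right
        refine ⟨ht, q'.reverse, fun z hz => ?_⟩
        rw [Walk.support_reverse, List.mem_reverse] at hz
        exact hmemq z (hsup ▸ List.mem_map_of_mem (f := some) hz)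
    -- the "component plus apex" sets are 2-connected
    have hKtc : ∀ s0 : V, G.Adj v s0 → s0 ∈ A →
        TwoConnSet G ({t | t ∈ A \ {v} ∧ ∃ p : G.Walk s0 t, ∀ z ∈ p.support, z ∈ A \ {v}}
          ∪ {v}) := by
      intro s0 hvs0 hs0A
      set K : Set V := {t | t ∈ A \ {v} ∧ ∃ p : G.Walk s0 t, ∀ z ∈ p.support, z ∈ A \ {v}}
        with hK
      have hs0Av : s0 ∈ A \ {v} := ⟨hs0A, by simpa using fun h => hvs0.ne' h⟩
      have hs0K : s0 ∈ K := ⟨hs0Av, Walk.nil, fun z hz => by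
        obtain rfl : z = s0 := by simpa using hz
        exact hs0Av⟩
      have hKclosed : ∀ {t : V} (p : G.Walk s0 t), (∀ z ∈ p.support, z ∈ A \ {v}) →
          ∀ z ∈ p.support, z ∈ K := by
        intro t p hp z hz
        exact ⟨hp z hz, p.takeUntil z hz, fun y hy => hp y (p.support_takeUntil_subset hz hy)⟩
      have hKAv : K ⊆ A \ {v} := fun t ht => ht.1
      refine ⟨⟨v, Or.inr rfl⟩, ?_, ?_⟩
      · refine induce_connected_of_hub (h := v) (Or.inr rfl) ?_
        intro x hx
        rcases hx with hxK | hxv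
        · obtain ⟨hxAv, p, hp⟩ := hxK
          refine ⟨p.reverse.append (Walk.cons hvs0.symm Walk.nil), fun z hz => ?_⟩
          rw [Walk.mem_support_append_iff] at hz
          rcases hz with h | h
          · rw [Walk.support_reverse, List.mem_reverse] at h
            exact Or.inl (hKclosed p hp z h)
          · rcases (by simpa using h : z = s0 ∨ z = v) with rfl | rfl
            · exact Or.inl hs0K
            · exact Or.inr rfl
        · obtain rfl : x = v := hxv
          exact ⟨Walk.nil, fun z hz => by
            obtain rfl : z = x := by simpa using hz
            exact Or.inr rfl⟩
      · intro t ht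
        right
        rcases ht with htK | htv
        · have htv' : t ≠ v := (hKAv htK).2
          have hset : (K ∪ {v}) \ {t} = (K \ {t}) ∪ {v} := by
            ext z
            constructor
            · rintro ⟨h1 | h1, h2⟩
              · exact Or.inl ⟨h1, h2⟩
              · exact Or.inr h1
            · rintro (⟨h1, h2⟩ | h1)
              · exact ⟨Or.inl h1, h2⟩
              · exact ⟨Or.inr h1, by simpa using fun h => htv' ((h1 : z = v) ▸ h).symm⟩
          rw [hset]
          refine induce_connected_of_hub (h := v) (Or.inr rfl) ?_
          intro x hx
          rcases hx with ⟨hxK, hxt⟩ | hxv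
          · -- x reaches v within (A \ {t}) avoiding v until the end
            have hxA : x ∈ A := (hKAv hxK).1
            have hxv' : x ≠ v := (hKAv hxK).2
            have hconnAt := hdelx t (hKAv htK).1 htv'
            rw [induce_connected_iff'] at hconnAt
            obtain ⟨-, HAt⟩ := hconnAt
            obtain ⟨p0, hp0⟩ := HAt x ⟨hxA, by simpa using fun h => hxt h⟩
              v ⟨hvA, by simpa using fun h => htv' h.symm⟩
            obtain ⟨s, q, hadj, hvq, hsubq⟩ := walk_avoid_end p0 hxv'
            have hqmem : ∀ z ∈ q.support, z ∈ (A \ {v}) ∧ z ≠ t := by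
              intro z hz
              have h2 := hp0 z (hsubq z hz)
              exact ⟨⟨h2.1, fun h => hvq (h ▸ hz)⟩, fun h => h2.2 (by simp [h])⟩
            -- all of q's support is in K
            obtain ⟨-, px, hpx⟩ := hxK
            have hqK : ∀ z ∈ q.support, z ∈ K := by
              intro z hz
              have := hKclosed (px.append (q.takeUntil z hz)) ?_ z ?_
              · exact this
              · intro y hy
                rw [Walk.mem_support_append_iff] at hy
                rcases hy with h | h
                · exact hpx y h
                · exact (hqmem y (q.support_takeUntil_subset hz h)).1
              · rw [Walk.mem_support_append_iff]
                exact Or.inr (q.takeUntil z hz).end_mem_support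
            refine ⟨q.append (Walk.cons hadj Walk.nil), fun z hz => ?_⟩
            rw [Walk.mem_support_append_iff] at hz
            rcases hz with h | h
            · exact Or.inl ⟨hqK z h, (hqmem z h).2⟩
            · rcases (by simpa using h : z = s ∨ z = v) with rfl | rfl
              · exact Or.inl ⟨hqK z q.end_mem_support, (hqmem z q.end_mem_support).2⟩
              · exact Or.inr rfl
          · obtain rfl : x = v := hxv
            exact ⟨Walk.nil, fun z hz => by
              obtain rfl : z = x := by simpa using hz
              exact Or.inr rfl⟩
        · obtain rfl : t = v := htv
          have hset : (K ∪ {t}) \ {t} = K := by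
            ext z
            constructor
            · rintro ⟨h1 | h1, h2⟩
              · exact h1
              · exact absurd h1 h2
            · intro h1
              exact ⟨Or.inl h1, fun h => (hKAv h1).2 h⟩
          rw [hset]
          refine induce_connected_of_hub (h := s0) hs0K ?_
          intro x hx
          obtain ⟨hxAv, p, hp⟩ := hx
          exact ⟨p.reverse, fun z hz => hKclosed p hp z
            (by rwa [Walk.support_reverse, List.mem_reverse] at hz)⟩
    -- conclude: each component set is inside b1 resp. b2
    have hKub1 : ({t | t ∈ A \ {v} ∧ ∃ p : G.Walk u t, ∀ z ∈ p.support, z ∈ A \ {v}} ∪ {v})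
        ⊆ b1 := by
      have htc := hKtc u S.hu.symm huA
      have huK : u ∈ ({t | t ∈ A \ {v} ∧ ∃ p : G.Walk u t, ∀ z ∈ p.support, z ∈ A \ {v}}
          ∪ {v} : Set V) := by
        left
        exact ⟨⟨huA, by simpa using fun h => S.hu.ne h⟩, Walk.nil, fun z hz => by
          obtain rfl : z = u := by simpa using hz
          exact ⟨huA, by simpa using fun h => S.hu.ne h⟩⟩
      have hU := TwoConnSet.union' S.hb1.1 htc S.hub1 huK S.hvb1 (Or.inr rfl) S.hu.ne
      have heq := S.hb1.2 _ Set.subset_union_left hU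
      intro x hx
      rw [← heq]
      exact Or.inr hx
    have hKwb2 : ({t | t ∈ A \ {v} ∧ ∃ p : G.Walk w t, ∀ z ∈ p.support, z ∈ A \ {v}} ∪ {v})
        ⊆ b2 := by
      have htc := hKtc w S.hw.symm hwA
      have hwK : w ∈ ({t | t ∈ A \ {v} ∧ ∃ p : G.Walk w t, ∀ z ∈ p.support, z ∈ A \ {v}}
          ∪ {v} : Set V) := by
        left
        exact ⟨⟨hwA, by simpa using fun h => S.hw.ne h⟩, Walk.nil, fun z hz => by
          obtain rfl : z = w := by simpa using hz
          exact ⟨hwA, by simpa using fun h => S.hw.ne h⟩⟩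
      have hU := TwoConnSet.union' S.hb2.1 htc S.hwb2 hwK S.hvb2 (Or.inr rfl) S.hw.ne
      have heq := S.hb2.2 _ Set.subset_union_left hU
      intro x hx
      rw [← heq]
      exact Or.inr hx
    intro x hxA
    rcases eq_or_ne x v with rfl | hxv
    · exact Or.inl S.hvb1
    · rcases hc1 x ⟨hxA, by simpa using fun h => hxv h⟩ with h | h
      · exact Or.inl (hKub1 (Or.inl h))
      · exact Or.inr (hKwb2 (Or.inl h))
  · push_neg at hA2
    intro t ht
    obtain ⟨c, hcC, hadj⟩ := neighbor_in_connected hC.2.1 hnC (ht : some t ∈ C) (by simp)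
    rcases adj2_none_iff.1 hadj with rfl | rfl
    · have : t = u := hA2 t u ht hcC
      exact Or.inl (this ▸ S.hub1)
    · have : t = w := hA2 t w ht hcC
      exact Or.inr (this ▸ S.hwb2)

lemma Setting.BstarTwoConn (S : Setting G v u w b1 b2) :
    TwoConnSet (addVertexTwoEdges G u w) ((some '' (b1 ∪ b2)) ∪ {none}) := by
  classical
  have hb1conn : (G.induce b1).Connected := S.hb1.1.2.1
  have hb2conn : (G.induce b2).Connected := S.hb2.1.2.1
  have hlift : ∀ {s c : V} (q : G.Walk s c), (c = u ∨ c = w) →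
      ∃ p : (addVertexTwoEdges G u w).Walk (some s) none,
        ∀ z ∈ p.support, z = none ∨ ∃ t ∈ q.support, z = some t := by
    intro s c q hc
    have hadjc : (addVertexTwoEdges G u w).Adj (some c) none := by
      rcases hc with rfl | rfl
      · exact adj2_none_iff'.2 (Or.inl rfl)
      · exact adj2_none_iff'.2 (Or.inr rfl)
    refine ⟨(q.map (homUp G u w)).append (Walk.cons hadjc Walk.nil), fun z hz => ?_⟩
    replace hz : z ∈ (q.map (homUp G u w)).support ∨ z ∈ (Walk.cons hadjc Walk.nil).support :=
      (Walk.mem_support_append_iff _ _).1 hz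
    rcases hz with h | h
    · simp only [Walk.support_map] at h
      obtain ⟨t, ht, rfl⟩ := List.mem_map.1 h
      exact Or.inr ⟨t, ht, rfl⟩
    · rcases (by simpa using h : z = some c ∨ z = none) with rfl | rfl
      · exact Or.inr ⟨c, q.end_mem_support, rfl⟩
      · exact Or.inl rfl
  refine ⟨⟨none, Or.inr rfl⟩, ?_, ?_⟩
  · refine induce_connected_of_hub (h := none) (Or.inr rfl) ?_
    rintro x hx
    rcases hx with ⟨s, hs, rfl⟩ | hxn
    · have hq : ∃ (c : V) (q : G.Walk s c), (c = u ∨ c = w) ∧ ∀ z ∈ q.support, z ∈ b1 ∪ b2 := by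
        rcases hs with hs1 | hs2
        · obtain ⟨-, H⟩ := induce_connected_iff'.1 hb1conn
          obtain ⟨q, hq⟩ := H s hs1 u S.hub1
          exact ⟨u, q, Or.inl rfl, fun z hz => Or.inl (hq z hz)⟩
        · obtain ⟨-, H⟩ := induce_connected_iff'.1 hb2conn
          obtain ⟨q, hq⟩ := H s hs2 w S.hwb2
          exact ⟨w, q, Or.inr rfl, fun z hz => Or.inr (hq z hz)⟩
      obtain ⟨c, q, hc, hsupq⟩ := hq
      obtain ⟨p, hp⟩ := hlift q hc
      refine ⟨p, fun z hz => ?_⟩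
      rcases hp z hz with rfl | ⟨t, ht, rfl⟩
      · exact Or.inr rfl
      · exact Or.inl ⟨t, hsupq t ht, rfl⟩
    · obtain rfl : x = none := hxn
      exact ⟨Walk.nil, fun z hz => by
        obtain rfl : z = none := by simpa using hz
        exact Or.inr rfl⟩
  · intro t ht
    right
    rcases ht with ⟨y, hy, rfl⟩ | htn
    · -- delete some y
      refine induce_connected_of_hub (h := none) ⟨Or.inr rfl, by simp⟩ ?_
      rintro x hx
      obtain ⟨hx1, hx2⟩ := hx
      rcases hx1 with ⟨s, hs, rfl⟩ | hxn
      · have hsy : s ≠ y := fun h => hx2 (by simp [h])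
        have hroute : ∃ (c : V) (q : G.Walk s c), (c = u ∨ c = w) ∧
            ∀ z ∈ q.support, z ∈ (b1 ∪ b2) ∧ z ≠ y := by
          rcases hs with hs1 | hs2
          · by_cases hyu : y = u
            · obtain ⟨-, H1⟩ := induce_connected_iff'.1 (S.b1_del_conn y)
              obtain ⟨q1, hq1⟩ := H1 s ⟨hs1, by simpa using hsy⟩ v
                ⟨S.hvb1, by simpa using fun h => S.hu.ne (hyu ▸ h.symm)⟩
              obtain ⟨-, H2⟩ := induce_connected_iff'.1 (S.b2_del_conn y)
              obtain ⟨q2, hq2⟩ := H2 v ⟨S.hvb2, by simpa using fun h => S.hu.ne (hyu ▸ h.symm)⟩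
                w ⟨S.hwb2, by simpa using fun h => S.une_w (h.trans hyu).symm⟩
              refine ⟨w, q1.append q2, Or.inr rfl, fun z hz => ?_⟩
              rw [Walk.mem_support_append_iff] at hz
              rcases hz with h | h
              · exact ⟨Or.inl (hq1 z h).1, fun h' => (hq1 z h).2 (by simpa using h')⟩
              · exact ⟨Or.inr (hq2 z h).1, fun h' => (hq2 z h).2 (by simpa using h')⟩
            · obtain ⟨-, H1⟩ := induce_connected_iff'.1 (S.b1_del_conn y)
              obtain ⟨q1, hq1⟩ := H1 s ⟨hs1, by simpa using hsy⟩ u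
                ⟨S.hub1, by simpa using fun h => hyu h.symm⟩
              exact ⟨u, q1, Or.inl rfl, fun z hz =>
                ⟨Or.inl (hq1 z hz).1, fun h' => (hq1 z hz).2 (by simpa using h')⟩⟩
          · by_cases hyw : y = w
            · obtain ⟨-, H2⟩ := induce_connected_iff'.1 (S.b2_del_conn y)
              obtain ⟨q1, hq1⟩ := H2 s ⟨hs2, by simpa using hsy⟩ v
                ⟨S.hvb2, by simpa using fun h => S.hw.ne (hyw ▸ h.symm)⟩
              obtain ⟨-, H1⟩ := induce_connected_iff'.1 (S.b1_del_conn y)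
              obtain ⟨q2, hq2⟩ := H1 v ⟨S.hvb1, by simpa using fun h => S.hw.ne (hyw ▸ h.symm)⟩
                u ⟨S.hub1, by simpa using fun h => S.une_w (h.trans hyw)⟩
              refine ⟨u, q1.append q2, Or.inl rfl, fun z hz => ?_⟩
              rw [Walk.mem_support_append_iff] at hz
              rcases hz with h | h
              · exact ⟨Or.inr (hq1 z h).1, fun h' => (hq1 z h).2 (by simpa using h')⟩
              · exact ⟨Or.inl (hq2 z h).1, fun h' => (hq2 z h).2 (by simpa using h')⟩
            · obtain ⟨-, H2⟩ := induce_connected_iff'.1 (S.b2_del_conn y)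
              obtain ⟨q1, hq1⟩ := H2 s ⟨hs2, by simpa using hsy⟩ w
                ⟨S.hwb2, by simpa using fun h => hyw h.symm⟩
              exact ⟨w, q1, Or.inr rfl, fun z hz =>
                ⟨Or.inr (hq1 z hz).1, fun h' => (hq1 z hz).2 (by simpa using h')⟩⟩
        obtain ⟨c, q, hc, hsupq⟩ := hroute
        obtain ⟨p, hp⟩ := hlift q hc
        refine ⟨p, fun z hz => ?_⟩
        rcases hp z hz with rfl | ⟨t', ht', rfl⟩
        · exact ⟨Or.inr rfl, by simp⟩
        · exact ⟨Or.inl ⟨t', (hsupq t' ht').1, rfl⟩,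
            by simpa using fun h => (hsupq t' ht').2 h⟩
      · obtain rfl : x = none := hxn
        exact ⟨Walk.nil, fun z hz => by
          obtain rfl : z = none := by simpa using hz
          exact ⟨Or.inr rfl, by simp⟩⟩
    · obtain rfl : t = none := htn
      have hset : ((some '' (b1 ∪ b2)) ∪ {none}) \ {none} = some '' (b1 ∪ b2) := by
        ext o
        constructor
        · rintro ⟨h1 | h1, h2⟩
          · exact h1
          · exact absurd h1 h2
        · intro h1
          exact ⟨Or.inl h1, fun h => none_not_mem_iota ((h : o = none) ▸ h1)⟩
      rw [hset]
      exact iota_connected_iff.2 (induce_union_connected hb1conn.preconnected hb2conn.preconnected ⟨v, S.hvb1, S.hvb2⟩)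

lemma Setting.block_in_union (S : Setting G v u w b1 b2) {B : Set V} (hB : IsBlock G B)
    (hsub : B ⊆ b1 ∪ b2) : B = b1 ∨ B = b2 := by
  by_cases h1 : B ⊆ b1
  · exact Or.inl (hB.2 b1 h1 S.hb1.1).symm
  by_cases h2 : B ⊆ b2
  · exact Or.inr (hB.2 b2 h2 S.hb2.1).symm
  · obtain ⟨x, hxB, hx1⟩ := Set.not_subset.1 h1
    obtain ⟨y, hyB, hy2⟩ := Set.not_subset.1 h2
    have hx2 : x ∈ b2 := (hsub hxB).resolve_left hx1
    have hy1 : y ∈ b1 := (hsub hyB).resolve_right hy2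
    have hyv : y ≠ v := fun h => hy2 (h ▸ S.hvb2)
    obtain ⟨-, H⟩ := induce_connected_iff'.1 hB.1.2.1
    obtain ⟨p, hp⟩ := H y hyB x hxB
    have hvp : v ∈ p.support := S.cross_mem p (fun z hz => hsub (hp z hz)) hy1 hyv hx1
    have hvB : v ∈ B := hp v hvp
    have hU : TwoConnSet G (B ∪ b1) := TwoConnSet.union' hB.1 S.hb1.1 hyB hy1 hvB S.hvb1 hyv
    have e1 := hB.2 _ Set.subset_union_left hU
    have e2 := S.hb1.2 _ Set.subset_union_right hU
    exact Or.inl (e1.symm.trans e2)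

lemma Setting.P1 (S : Setting G v u w b1 b2) {B : Set V} (hB : IsBlock G B)
    (h1 : B ≠ b1) (h2 : B ≠ b2) : IsBlock (addVertexTwoEdges G u w) (some '' B) := by
  refine ⟨iota_twoConn_iff.2 hB.1, ?_⟩
  intro C hsub hCtc
  by_cases hnC : none ∈ C
  · exfalso
    have hCB := S.P0 hCtc hnC
    have hBsub : B ⊆ b1 ∪ b2 := by
      intro t ht
      rcases hCB (hsub ⟨t, ht, rfl⟩) with ⟨t', ht', hts⟩ | h'
      · obtain rfl : t' = t := by injection hts
        exact ht'
      · exact absurd h' (by simp)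
    rcases S.block_in_union hB hBsub with rfl | rfl
    · exact h1 rfl
    · exact h2 rfl
  · have hCA : C = some '' {t | some t ∈ C} := by
      ext o
      cases o with
      | none => exact iff_of_false hnC none_not_mem_iota
      | some t =>
          constructor
          · intro h
            exact ⟨t, h, rfl⟩
          · rintro ⟨t', ht', he⟩
            obtain rfl : t' = t := by injection he
            exact ht'
    have hAB : B ⊆ {t | some t ∈ C} := fun t ht => hsub ⟨t, ht, rfl⟩
    rw [hCA] at hCtc ⊢
    rw [hB.2 _ hAB (iota_twoConn_iff.1 hCtc)]

lemma Setting.P2 (S : Setting G v u w b1 b2) :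
    IsBlock (addVertexTwoEdges G u w) ((some '' (b1 ∪ b2)) ∪ {none}) :=
  ⟨S.BstarTwoConn, fun _ hsub hCtc => Set.Subset.antisymm (S.P0 hCtc (hsub (Or.inr rfl))) hsub⟩

lemma Setting.P3 [Fintype V] (S : Setting G v u w b1 b2) {D : Set (Option V)}
    (hD : IsBlock (addVertexTwoEdges G u w) D) :
    D = (some '' (b1 ∪ b2)) ∪ {none} ∨
      ∃ B : Set V, IsBlock G B ∧ B ≠ b1 ∧ B ≠ b2 ∧ D = some '' B := by
  by_cases hnD : none ∈ D
  · exact Or.inl (hD.2 _ (S.P0 hD.1 hnD) S.BstarTwoConn).symm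
  · right
    have hDA : D = some '' {t | some t ∈ D} := by
      ext o
      cases o with
      | none => exact iff_of_false hnD none_not_mem_iota
      | some t =>
          constructor
          · intro h
            exact ⟨t, h, rfl⟩
          · rintro ⟨t', ht', he⟩
            obtain rfl : t' = t := by injection he
            exact ht'
    have hAtc : TwoConnSet G {t | some t ∈ D} := iota_twoConn_iff.1 (hDA ▸ hD.1)
    obtain ⟨B, hB, hABsub⟩ := exists_block hAtc
    by_cases hBb : B = b1 ∨ B = b2
    · exfalso
      have hDsub : D ⊆ (some '' (b1 ∪ b2)) ∪ {none} := by
        rw [hDA]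
        rintro o ⟨t, ht, rfl⟩
        left
        rcases hBb with rfl | rfl
        · exact ⟨t, Or.inl (hABsub ht), rfl⟩
        · exact ⟨t, Or.inr (hABsub ht), rfl⟩
      have he := hD.2 _ hDsub S.BstarTwoConn
      rw [← he] at hnD
      exact hnD (Or.inr rfl)
    · push_neg at hBb
      refine ⟨B, hB, hBb.1, hBb.2, ?_⟩
      have hsub : D ⊆ some '' B := by
        rw [hDA]
        rintro o ⟨t, ht, rfl⟩
        exact ⟨t, hABsub ht, rfl⟩
      exact (hD.2 _ hsub (iota_twoConn_iff.2 hB.1)).symm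

lemma card_ne_aux {α : Type*} [Finite α] (a : α) :
    Nat.card {x : α // x ≠ a} = Nat.card α - 1 := by
  classical
  haveI := Fintype.ofFinite α
  rw [Nat.card_eq_fintype_card, Nat.card_eq_fintype_card]
  have h := Fintype.card_subtype_compl (fun x : α => x = a)
  rw [Fintype.card_subtype_eq] at h
  convert h using 2

lemma Setting.partB [Fintype V] (S : Setting G v u w b1 b2) :
    numBlocks (addVertexTwoEdges G u w) = numBlocks G - 1 := by
  classical
  have hmap : ∀ B : {B : Set V // IsBlock G B ∧ B ≠ b2},
      IsBlock (addVertexTwoEdges G u w)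
        (if B.1 = b1 then (some '' (b1 ∪ b2)) ∪ {none} else some '' B.1) := by
    rintro ⟨B, hB, hBb2⟩
    by_cases h : B = b1
    · rw [if_pos h]
      exact S.P2
    · rw [if_neg h]
      exact S.P1 hB h hBb2
  have hbij : Function.Bijective (fun B : {B : Set V // IsBlock G B ∧ B ≠ b2} =>
      (⟨if B.1 = b1 then (some '' (b1 ∪ b2)) ∪ {none} else some '' B.1, hmap B⟩ :
        {D : Set (Option V) // IsBlock (addVertexTwoEdges G u w) D})) := by
    constructor
    · rintro ⟨B, hB, h2⟩ ⟨B', hB', h2'⟩ he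
      simp only [Subtype.mk.injEq] at he
      by_cases hb : B = b1 <;> by_cases hb' : B' = b1
      · exact Subtype.ext (hb.trans hb'.symm)
      · rw [if_pos hb, if_neg hb'] at he
        have hcontra : (none : Option V) ∈ some '' B' := by
          rw [← he]; exact Or.inr rfl
        exact absurd hcontra none_not_mem_iota
      · rw [if_neg hb, if_pos hb'] at he
        have hcontra : (none : Option V) ∈ some '' B := by
          rw [he]; exact Or.inr rfl
        exact absurd hcontra none_not_mem_iota
      · rw [if_neg hb, if_neg hb'] at he
        exact Subtype.ext ((Set.image_injective.mpr (Option.some_injective V)) he)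
    · rintro ⟨D, hD⟩
      rcases S.P3 hD with hD1 | ⟨B, hB, h1, h2, rfl⟩
      · refine ⟨⟨b1, S.hb1, S.hbne⟩, Subtype.ext ?_⟩
        simp only [if_pos rfl]
        exact hD1.symm
      · refine ⟨⟨B, hB, h2⟩, Subtype.ext ?_⟩
        simp only [if_neg h1]
  have hcard := Nat.card_eq_of_bijective _ hbij
  have e2 : {B : Set V // IsBlock G B ∧ B ≠ b2} ≃
      {x : {B : Set V // IsBlock G B} // x ≠ ⟨b2, S.hb2⟩} :=
    { toFun := fun B => ⟨⟨B.1, B.2.1⟩, fun h => B.2.2 (congrArg Subtype.val h)⟩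
      invFun := fun x => ⟨x.1.1, x.1.2, fun h => x.2 (Subtype.ext h)⟩
      left_inv := fun B => rfl
      right_inv := fun x => rfl }
  show Nat.card {D : Set (Option V) // IsBlock (addVertexTwoEdges G u w) D} =
    Nat.card {B : Set V // IsBlock G B} - 1
  rw [← hcard, Nat.card_congr e2, card_ne_aux]

end Main

end K4Aux

theorem addVertex_seriesParallel_blocks
    {V : Type*} [Fintype V] (G : SimpleGraph V)
    (hSP : ¬HasK4Subdivision G)
    (v u w : V) (hcut : IsCutVertex G v)
    (hu : G.Adj u v) (hw : G.Adj w v)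
    -- `next` is the clockwise successor in the cyclic order of the neighbors of `v`
    -- in the planar embedding of `G`; the edges `(u,v)` and `(w,v)` are consecutive.
    (next : V → V) (hrot : ∀ x : V, G.Adj v x → G.Adj v (next x))
    (hcons : next u = w)
    (b1 b2 : Set V) (hb1 : IsBlock G b1) (hb2 : IsBlock G b2) (hbne : b1 ≠ b2)
    (hub : u ∈ b1 ∧ v ∈ b1) (hwb : w ∈ b2 ∧ v ∈ b2) :
    ¬HasK4Subdivision (addVertexTwoEdges G u w) ∧
      numBlocks (addVertexTwoEdges G u w) = numBlocks G - 1 := by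
  have S : K4Aux.Setting G v u w b1 b2 :=
    ⟨hu, hw, hb1, hb2, hbne, hub.1, hub.2, hwb.1, hwb.2⟩
  exact ⟨S.partA hSP, S.partB⟩
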